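/- Let 0 < q < 1 and let A(ω) = a₁ω + a₀, B(ω) = b₂ω² + b₁ω + b₀ be complex polynomials with b₀ ≠ 0, b₂ ≠ 0, b₂ − (1−q)a₁ ≠ 0. Write B(ω) = b₂(ω−a)(ω−b) with roots a, b ≠ 0, and B(ω) − (1−q)ω·A(ω) = (b₂ − (1−q)a₁)(ω−c)(ω−d) with roots c, d ≠ 0. Then the function ϱ(ω) := (qω/a; q)_∞ · (qω/b; q)_∞ / ((ω/c; q)_∞ · (ω/d; q)_∞), defined at all ω ∈ ℂ where the denominator is nonzero, satisfies the q-Pearson functional equation ϱ(ω)·(B(ω) − (1−q)ω·A(ω)) = B(qω)·ϱ(qω) at every ω where both ϱ(ω) and ϱ(qω) are defined. -/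

import Mathlib

/-- The infinite q-Pochhammer symbol `(x; q)_∞ = ∏_{k=0}^∞ (1 − qᵏx)` over `ℂ`. -/
noncomputable def qPoch (q : ℝ) (x : ℂ) : ℂ :=
  ∏' k : ℕ, (1 - (q : ℂ) ^ k * x)

lemma hasProd_zero_of_eq_zero {f : ℕ → ℂ} {n : ℕ} (h : f n = 0) : HasProd f 0 := by
  rw [HasProd]
  apply Filter.Tendsto.congr' _ tendsto_const_nhds
  filter_upwards [Filter.eventually_ge_atTop ({n} : Finset ℕ)] with s hs
  exact (Finset.prod_eq_zero (hs (Finset.mem_singleton_self n)) h).symm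

lemma multipliable_qPochFactors (q : ℝ) (hq0 : 0 < q) (hq1 : q < 1) (x : ℂ) :
    Multipliable (fun k : ℕ ↦ 1 - (q : ℂ) ^ k * x) := by
  by_cases hz : ∃ n : ℕ, 1 - (q : ℂ) ^ n * x = 0
  · obtain ⟨n, hn⟩ := hz
    exact ⟨0, hasProd_zero_of_eq_zero hn⟩
  · push_neg at hz
    have hsum : Summable (fun k : ℕ ↦ Complex.log (1 - (q : ℂ) ^ k * x)) := by
      have hgeo : Summable (fun k : ℕ ↦ (3/2 : ℝ) * (q ^ k * ‖x‖)) :=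
        ((summable_geometric_of_lt_one hq0.le hq1).mul_right ‖x‖).mul_left _
      apply Summable.of_norm_bounded_eventually_nat hgeo
      have : Filter.Tendsto (fun k : ℕ ↦ q ^ k * ‖x‖) Filter.atTop (nhds 0) := by
        simpa using (tendsto_pow_atTop_nhds_zero_of_lt_one hq0.le hq1).mul_const ‖x‖
      filter_upwards [this.eventually_le_const (by norm_num : (0:ℝ) < 1/2)] with k hk
      have h1 : ‖(-((q:ℂ)^k * x))‖ ≤ 1/2 := by
        simpa [norm_mul, norm_pow, abs_of_pos hq0] using hk
      have := Complex.norm_log_one_add_half_le_self h1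
      simp only [norm_neg, norm_mul, norm_pow, Complex.norm_real] at this ⊢
      calc ‖Complex.log (1 - (q:ℂ)^k * x)‖
          = ‖Complex.log (1 + -((q:ℂ)^k * x))‖ := by ring_nf
        _ ≤ 3/2 * ‖(q:ℂ)^k * x‖ := by simpa using this
        _ ≤ 3/2 * (q ^ k * ‖x‖) := by
            simp [norm_mul, norm_pow, Complex.norm_real, abs_of_pos hq0]
    have heq : (Complex.exp ∘ fun k : ℕ ↦ Complex.log (1 - (q : ℂ) ^ k * x))
        = fun k : ℕ ↦ 1 - (q : ℂ) ^ k * x := by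
      funext k
      exact Complex.exp_log (hz k)
    exact ⟨_, heq ▸ hsum.hasSum.cexp⟩

set_option maxHeartbeats 1000000 in
lemma qPoch_rec (q : ℝ) (hq0 : 0 < q) (hq1 : q < 1) (x : ℂ) :
    qPoch q x = (1 - x) * qPoch q ((q : ℂ) * x) := by
  have hm : Multipliable (fun k : ℕ ↦ 1 - (q : ℂ) ^ (k + 1) * x) := by
    have := multipliable_qPochFactors q hq0 hq1 ((q : ℂ) * x)
    apply this.congr
    intro k
    ring
  have h := tprod_eq_zero_mul' (f := fun k : ℕ ↦ 1 - (q:ℂ)^k * x) hm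
  simp only [pow_zero, one_mul] at h
  rw [qPoch, h, qPoch]
  congr 1
  apply tprod_congr
  intro k
  ring

lemma pearson_alg {K : Type*} [Field K] (v1 v2 P1 P2 u1 u2 Q1 Q2 k : K)
    (hu1 : u1 ≠ 0) (hu2 : u2 ≠ 0) (hQ1 : Q1 ≠ 0) (hQ2 : Q2 ≠ 0) :
    v1 * P1 * (v2 * P2) / (u1 * Q1 * (u2 * Q2)) * (k * (u1 * u2))
      = k * (v1 * v2) * (P1 * P2 / (Q1 * Q2)) := by
  field_simp


set_option maxHeartbeats 2000000 in
/-- Let `0 < q < 1` and `A(ω) = a₁ω + a₀`, `B(ω) = b₂ω² + b₁ω + b₀` be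
complex polynomials with `b₀ ≠ 0`, `b₂ ≠ 0`, `b₂ − (1−q)a₁ ≠ 0`.  Write
`B(ω) = b₂(ω−a)(ω−b)` with roots `a, b ≠ 0`, and
`B(ω) − (1−q)ωA(ω) = (b₂ − (1−q)a₁)(ω−c)(ω−d)` with roots `c, d ≠ 0`.  Then
`ϱ(ω) = (qω/a;q)_∞(qω/b;q)_∞ / ((ω/c;q)_∞(ω/d;q)_∞)` satisfies the q-Pearson functional
equation `ϱ(ω)(B(ω) − (1−q)ωA(ω)) = B(qω)ϱ(qω)` wherever both `ϱ(ω)` and `ϱ(qω)`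
are defined (i.e. the denominators are nonzero). -/
theorem stmt_6 (q : ℝ) (hq0 : 0 < q) (hq1 : q < 1)
    (a₀ a₁ b₀ b₁ b₂ a b c d : ℂ)
    (A B : ℂ → ℂ)
    (hA : ∀ ω : ℂ, A ω = a₁ * ω + a₀)
    (hB : ∀ ω : ℂ, B ω = b₂ * ω ^ 2 + b₁ * ω + b₀)
    (hb₀ : b₀ ≠ 0) (hb₂ : b₂ ≠ 0) (hlead : b₂ - (1 - (q : ℂ)) * a₁ ≠ 0)
    (ha : a ≠ 0) (hb : b ≠ 0) (hc : c ≠ 0) (hd : d ≠ 0)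
    (hBroots : ∀ ω : ℂ, B ω = b₂ * (ω - a) * (ω - b))
    (hCroots : ∀ ω : ℂ, B ω - (1 - (q : ℂ)) * ω * A ω
      = (b₂ - (1 - (q : ℂ)) * a₁) * (ω - c) * (ω - d))
    (ϱ : ℂ → ℂ)
    (hϱ : ∀ ω : ℂ, ϱ ω =
      qPoch q ((q : ℂ) * ω / a) * qPoch q ((q : ℂ) * ω / b)
        / (qPoch q (ω / c) * qPoch q (ω / d))) :
    ∀ ω : ℂ, qPoch q (ω / c) * qPoch q (ω / d) ≠ 0 →
      qPoch q ((q : ℂ) * ω / c) * qPoch q ((q : ℂ) * ω / d) ≠ 0 →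
      ϱ ω * (B ω - (1 - (q : ℂ)) * ω * A ω) = B ((q : ℂ) * ω) * ϱ ((q : ℂ) * ω) := by
  intro ω h1 h2
  have h0 : b₀ = b₂ * a * b := by
    have := hBroots 0; rw [hB 0] at this; linear_combination this
  have h0' : b₀ = (b₂ - (1 - (q : ℂ)) * a₁) * c * d := by
    have := hCroots 0; rw [hB 0, hA 0] at this; linear_combination this
  have hc1 : qPoch q (ω / c) = (1 - ω / c) * qPoch q ((q : ℂ) * ω / c) := by
    rw [qPoch_rec q hq0 hq1 (ω / c), mul_div_assoc]
  have hd1 : qPoch q (ω / d) = (1 - ω / d) * qPoch q ((q : ℂ) * ω / d) := by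
    rw [qPoch_rec q hq0 hq1 (ω / d), mul_div_assoc]
  have ha1 : qPoch q ((q : ℂ) * ω / a)
      = (1 - (q : ℂ) * ω / a) * qPoch q ((q : ℂ) * ((q : ℂ) * ω) / a) := by
    rw [qPoch_rec q hq0 hq1 ((q : ℂ) * ω / a)]; congr 2; ring
  have hb1 : qPoch q ((q : ℂ) * ω / b)
      = (1 - (q : ℂ) * ω / b) * qPoch q ((q : ℂ) * ((q : ℂ) * ω) / b) := by
    rw [qPoch_rec q hq0 hq1 ((q : ℂ) * ω / b)]; congr 2; ring
  rw [hc1, hd1] at h1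
  have huc : (1 - ω / c) ≠ 0 := fun h => h1 (by rw [h]; ring)
  have hud : (1 - ω / d) ≠ 0 := fun h => h1 (by rw [h]; ring)
  have hQ1 : qPoch q ((q : ℂ) * ω / c) ≠ 0 := fun h => h2 (by rw [h]; ring)
  have hQ2 : qPoch q ((q : ℂ) * ω / d) ≠ 0 := fun h => h2 (by rw [h]; ring)
  have hL : (b₂ - (1 - (q : ℂ)) * a₁) * c * d = b₂ * a * b := by
    linear_combination h0 - h0'
  have k1 : (b₂ - (1 - (q : ℂ)) * a₁) * (ω - c) * (ω - d)
      = b₂ * a * b * ((1 - ω / c) * (1 - ω / d)) := by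
    have : (b₂ - (1 - (q : ℂ)) * a₁) * (ω - c) * (ω - d)
        = ((b₂ - (1 - (q : ℂ)) * a₁) * c * d) * ((1 - ω / c) * (1 - ω / d)) := by
      field_simp
      ring
    rw [this, hL]
  have k2 : b₂ * ((q : ℂ) * ω - a) * ((q : ℂ) * ω - b)
      = b₂ * a * b * ((1 - (q : ℂ) * ω / a) * (1 - (q : ℂ) * ω / b)) := by
    field_simp
    ring
  rw [hϱ ω, hϱ ((q : ℂ) * ω), hCroots ω, hBroots ((q : ℂ) * ω), hc1, hd1, ha1, hb1, k1, k2]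
  exact pearson_alg _ _ _ _ _ _ _ _ _ huc hud hQ1 hQ2
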